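/- Let A be a k-algebra, B = ⊕_{i≥0} Bᵢ a graded k-algebra, and D₀ = u : A → B₀, D₁, …, Dₙ : A → Bᵢ linear maps satisfying Dᵢ(xy) = Σ_{j=0}^{i} Dⱼ(x)D_{i−j}(y) for all 0 ≤ i ≤ n and x, y ∈ A. Define the 2-cochain c : A × A → B_{n+1} by c(x, y) = Σ_{i=1}^{n} Dᵢ(x)·D_{n+1−i}(y). Then c is a Hochschild 2-cocycle for the A-bimodule structure on B_{n+1} induced by u, i.e., for all x, y, z ∈ A: u(x)·c(y, z) − c(xy, z) + c(x, yz) − c(x, y)·u(z) = 0. -/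
import Mathlib


open Finset

/-- The cocycle verification in the proof of (i)⇒(ii) of Theorem 2.1: if the
maps `Dᵢ` satisfy the graded Leibniz identity up to degree `n`, then
`c(x, y) = Σ_{i=1}^{n} Dᵢ(x) D_{n+1−i}(y)` is a Hochschild 2-cocycle with
values in `B_{n+1}` (with bimodule structure induced by `u = D₀`). -/
theorem stmt8 {k : Type*} [Field k] {A B : Type*}
    [Ring A] [Algebra k A] [Ring B] [Algebra k B]
    (𝒜 : ℕ → Submodule k B) [GradedRing 𝒜]
    (n : ℕ) (D : ℕ → A →ₗ[k] B) (hD : ∀ i (x : A), D i x ∈ 𝒜 i)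
    (hLeib : ∀ i ≤ n, ∀ x y : A,
      D i (x * y) = ∑ j ∈ range (i + 1), D j x * D (i - j) y) :
    ∀ x y z : A,
      D 0 x * (∑ i ∈ Icc 1 n, D i y * D (n + 1 - i) z)
        - (∑ i ∈ Icc 1 n, D i (x * y) * D (n + 1 - i) z)
        + (∑ i ∈ Icc 1 n, D i x * D (n + 1 - i) (y * z))
        - (∑ i ∈ Icc 1 n, D i x * D (n + 1 - i) y) * D 0 z = 0 := by
  intro x y z
  set M : B := ∑ i ∈ Icc 1 n, ∑ j ∈ range (n + 1 - i),
      D i x * D j y * D (n + 1 - i - j) z with hM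
  have e1 : (∑ i ∈ Icc 1 n, D i (x * y) * D (n + 1 - i) z)
      = D 0 x * (∑ i ∈ Icc 1 n, D i y * D (n + 1 - i) z) + M := by
    have step1 : (∑ i ∈ Icc 1 n, D i (x * y) * D (n + 1 - i) z)
        = ∑ i ∈ Icc 1 n, (D 0 x * D i y * D (n + 1 - i) z
            + ∑ j ∈ range i, D (j + 1) x * D (i - (j + 1)) y * D (n + 1 - i) z) := by
      refine Finset.sum_congr rfl fun i hi => ?_
      rw [hLeib i (mem_Icc.mp hi).2, Finset.sum_mul, Finset.sum_range_succ']
      simp [add_comm]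
    rw [step1, Finset.sum_add_distrib]
    congr 1
    · rw [Finset.mul_sum]
      exact Finset.sum_congr rfl fun i _ => mul_assoc _ _ _
    · rw [hM, Finset.sum_sigma', Finset.sum_sigma']
      refine Finset.sum_nbij' (i := fun p => ⟨p.2 + 1, p.1 - (p.2 + 1)⟩)
        (j := fun q => ⟨q.1 + q.2, q.1 - 1⟩) ?_ ?_ ?_ ?_ ?_
      · rintro ⟨i, j⟩ hp
        simp only [Finset.mem_sigma, mem_Icc, Finset.mem_range] at hp ⊢
        omega
      · rintro ⟨a, b⟩ hq
        simp only [Finset.mem_sigma, mem_Icc, Finset.mem_range] at hq ⊢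
        omega
      · rintro ⟨i, j⟩ hp
        simp only [Finset.mem_sigma, mem_Icc, Finset.mem_range] at hp
        simp only [Sigma.mk.inj_iff, heq_eq_eq]
        omega
      · rintro ⟨a, b⟩ hq
        simp only [Finset.mem_sigma, mem_Icc, Finset.mem_range] at hq
        simp only [Sigma.mk.inj_iff, heq_eq_eq]
        omega
      · rintro ⟨i, j⟩ hp
        simp only [Finset.mem_sigma, mem_Icc, Finset.mem_range] at hp
        have h1 : n + 1 - (j + 1) - (i - (j + 1)) = n + 1 - i := by omega
        rw [h1]
  have e2 : (∑ i ∈ Icc 1 n, D i x * D (n + 1 - i) (y * z))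
      = M + (∑ i ∈ Icc 1 n, D i x * D (n + 1 - i) y) * D 0 z := by
    have step1 : (∑ i ∈ Icc 1 n, D i x * D (n + 1 - i) (y * z))
        = ∑ i ∈ Icc 1 n, ((∑ j ∈ range (n + 1 - i),
              D i x * D j y * D (n + 1 - i - j) z)
            + D i x * D (n + 1 - i) y * D 0 z) := by
      refine Finset.sum_congr rfl fun i hi => ?_
      obtain ⟨hi1, hi2⟩ := mem_Icc.mp hi
      have hle : n + 1 - i ≤ n := by omega
      rw [hLeib (n + 1 - i) hle, Finset.mul_sum, Finset.sum_range_succ]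
      congr 1
      · exact Finset.sum_congr rfl fun j _ => by rw [mul_assoc]
      · rw [Nat.sub_self, mul_assoc]
    rw [step1, Finset.sum_add_distrib, hM, Finset.sum_mul]
  rw [e1, e2]
  abel
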